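/- Let p₁ > p₄ > 0, ρ > 0, and set a := p₄/p₁ ∈ (0,1). Let D, R, I : ℝ → ℝ be differentiable functions satisfying D' = 2p₁·I·D, R' = 2p₁·I·R - 2p₄ρ·I, I' = -2p₁(D² + R²) + 2p₄ρ·R on ℝ, with D(0)² + R(0)² + I(0)² = ρ², and assume (D(0),R(0),I(0)) is not one of the two fixed points (0, aρ, ±ρ√(1-a²)). Set M := √((aρ - R(0))² + (1-a²)·D(0)²). Then there exists τ₀ ∈ ℝ with τ₀·I(0) ≥ 0 and (1-a²)ρ / (M·cosh(τ₀) - a(aρ - R(0))) = 1 such that for all τ ∈ ℝ: D(τ) = (1-a²)ρ·D(0) / (M·cosh(2p₁ρ√(1-a²)·τ - τ₀) - a(aρ - R(0))), R(τ) = aρ + (1-a²)ρ·(R(0) - aρ) / (M·cosh(2p₁ρ√(1-a²)·τ - τ₀) - a(aρ - R(0))), and I(τ) = -ρ√(1-a²)·M·sinh(2p₁ρ√(1-a²)·τ - τ₀) / (M·cosh(2p₁ρ√(1-a²)·τ - τ₀) - a(aρ - R(0))). In particular (D(τ),R(τ),I(τ)) → (0, aρ, ∓ρ√(1-a²)) as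 τ → ±∞. -/

import Mathlib

open Filter Set Metric

private def vf3 (p₁ p₄ ρ : ℝ) (x : ℝ × ℝ × ℝ) : ℝ × ℝ × ℝ :=
  (2*p₁*x.2.2*x.1, 2*p₁*x.2.2*x.2.1 - 2*p₄*ρ*x.2.2,
    -(2*p₁*(x.1^2 + x.2.1^2)) + 2*p₄*ρ*x.2.1)

private lemma conserve3 (p₁ p₄ ρ : ℝ) (D R I : ℝ → ℝ)
    (hD : ∀ τ, HasDerivAt D (2 * p₁ * I τ * D τ) τ)
    (hR : ∀ τ, HasDerivAt R (2 * p₁ * I τ * R τ - 2 * p₄ * ρ * I τ) τ)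
    (hI : ∀ τ, HasDerivAt I (-(2 * p₁ * (D τ ^ 2 + R τ ^ 2)) + 2 * p₄ * ρ * R τ) τ)
    (τ : ℝ) : D τ ^ 2 + R τ ^ 2 + I τ ^ 2 = D 0 ^ 2 + R 0 ^ 2 + I 0 ^ 2 := by
  have hN : ∀ t, HasDerivAt (fun t => D t ^ 2 + R t ^ 2 + I t ^ 2) 0 t := by
    intro t
    have h := (((hD t).pow 2).add ((hR t).pow 2)).add ((hI t).pow 2)
    refine h.congr_deriv ?_
    push_cast
    ring
  exact is_const_of_deriv_eq_zero (fun x => (hN x).differentiableAt)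
    (fun x => (hN x).deriv) τ 0

private lemma abs_cmul_le (c z B : ℝ) (hc : 0 ≤ c) (hz : |z| ≤ B) : |c * z| ≤ c * B := by
  rw [abs_mul, abs_of_nonneg hc]
  exact mul_le_mul_of_nonneg_left hz hc

private lemma key_mul_bound (ρ d u v u' v' : ℝ) (hρ : 0 ≤ ρ)
    (hu : |u| ≤ ρ) (hv' : |v'| ≤ ρ) (huu : |u - u'| ≤ d) (hvv : |v - v'| ≤ d) :
    |u*v - u'*v'| ≤ ρ*d + ρ*d := by
  have h : u*v - u'*v' = u*(v - v') + v'*(u - u') := by ring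
  rw [h]
  calc |u * (v - v') + v' * (u - u')|
      ≤ |u * (v - v')| + |v' * (u - u')| := abs_add_le _ _
    _ = |u| * |v - v'| + |v'| * |u - u'| := by rw [abs_mul, abs_mul]
    _ ≤ ρ * d + ρ * d :=
        add_le_add (mul_le_mul hu hvv (abs_nonneg _) hρ)
          (mul_le_mul hv' huu (abs_nonneg _) hρ)

private lemma vf3_lip (p₁ p₄ ρ : ℝ) (h₁ : 0 < p₁) (h₄ : 0 ≤ p₄) (h41 : p₄ ≤ p₁)
    (hρ : 0 < ρ) :
    LipschitzOnWith (10*p₁*ρ).toNNReal (vf3 p₁ p₄ ρ) (closedBall (0 : ℝ × ℝ × ℝ) ρ) := by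
  rw [lipschitzOnWith_iff_dist_le_mul]
  rintro ⟨x1, x2, x3⟩ hx ⟨y1, y2, y3⟩ hy
  rw [mem_closedBall_zero_iff, Prod.norm_def, Prod.norm_def] at hx hy
  simp only [Real.norm_eq_abs, max_le_iff] at hx hy
  obtain ⟨hx1, hx2, hx3⟩ := hx
  obtain ⟨hy1, hy2, hy3⟩ := hy
  set d := dist (x1, x2, x3) (y1, y2, y3) with hd
  have hd0 : 0 ≤ d := dist_nonneg
  have hdm : d = max (dist x1 y1) (max (dist x2 y2) (dist x3 y3)) := by
    rw [hd, Prod.dist_eq, Prod.dist_eq]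
  have h1 : |x1 - y1| ≤ d := by
    rw [hdm]; exact le_trans (le_of_eq (Real.dist_eq _ _).symm) (le_max_left _ _)
  have h2 : |x2 - y2| ≤ d := by
    rw [hdm]; exact le_trans (le_of_eq (Real.dist_eq _ _).symm)
      (le_trans (le_max_left _ _) (le_max_right _ _))
  have h3 : |x3 - y3| ≤ d := by
    rw [hdm]; exact le_trans (le_of_eq (Real.dist_eq _ _).symm)
      (le_trans (le_max_right _ _) (le_max_right _ _))
  have h1' : |y1 - x1| ≤ d := by rw [abs_sub_comm]; exact h1
  have h2' : |y2 - x2| ≤ d := by rw [abs_sub_comm]; exact h2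
  have h3' : |y3 - x3| ≤ d := by rw [abs_sub_comm]; exact h3
  have hK : ((10*p₁*ρ).toNNReal : ℝ) = 10*p₁*ρ := Real.coe_toNNReal _ (by positivity)
  rw [hK]
  have hb31 := key_mul_bound ρ d x3 x1 y3 y1 hρ.le hx3 hy1 h3 h1
  have hb32 := key_mul_bound ρ d x3 x2 y3 y2 hρ.le hx3 hy2 h3 h2
  have hb11 := key_mul_bound ρ d y1 y1 x1 x1 hρ.le hy1 hx1 h1' h1'
  have hb22 := key_mul_bound ρ d y2 y2 x2 x2 hρ.le hy2 hx2 h2' h2'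
  have h2p : 2*p₄*ρ*d ≤ 2*p₁*ρ*d := by
    have h' : 2*p₄*ρ ≤ 2*p₁*ρ := by nlinarith
    exact mul_le_mul_of_nonneg_right h' hd0
  have hpos : 0 ≤ p₁*ρ*d := mul_nonneg (mul_nonneg h₁.le hρ.le) hd0
  have hA : dist (2*p₁*x3*x1) (2*p₁*y3*y1) ≤ 10*p₁*ρ*d := by
    rw [Real.dist_eq]
    have e : 2*p₁*x3*x1 - 2*p₁*y3*y1 = (2*p₁) * (x3*x1 - y3*y1) := by ring
    rw [e]
    have := abs_cmul_le (2*p₁) (x3*x1 - y3*y1) (ρ*d + ρ*d) (by positivity) hb31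
    linarith
  have hB : dist (2*p₁*x3*x2 - 2*p₄*ρ*x3) (2*p₁*y3*y2 - 2*p₄*ρ*y3) ≤ 10*p₁*ρ*d := by
    rw [Real.dist_eq]
    have e : 2*p₁*x3*x2 - 2*p₄*ρ*x3 - (2*p₁*y3*y2 - 2*p₄*ρ*y3)
        = (2*p₁) * (x3*x2 - y3*y2) + (2*p₄*ρ) * (y3 - x3) := by ring
    rw [e]
    have t1 := abs_cmul_le (2*p₁) (x3*x2 - y3*y2) (ρ*d + ρ*d) (by positivity) hb32
    have t2 := abs_cmul_le (2*p₄*ρ) (y3 - x3) d (by positivity) h3'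
    calc |(2*p₁) * (x3*x2 - y3*y2) + (2*p₄*ρ) * (y3 - x3)|
        ≤ |(2*p₁) * (x3*x2 - y3*y2)| + |(2*p₄*ρ) * (y3 - x3)| := abs_add_le _ _
      _ ≤ 10*p₁*ρ*d := by linarith
  have hC : dist (-(2*p₁*(x1^2 + x2^2)) + 2*p₄*ρ*x2) (-(2*p₁*(y1^2 + y2^2)) + 2*p₄*ρ*y2)
      ≤ 10*p₁*ρ*d := by
    rw [Real.dist_eq]
    have e : -(2*p₁*(x1^2 + x2^2)) + 2*p₄*ρ*x2 - (-(2*p₁*(y1^2 + y2^2)) + 2*p₄*ρ*y2)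
        = (2*p₁) * (y1*y1 - x1*x1) + (2*p₁) * (y2*y2 - x2*x2) + (2*p₄*ρ) * (x2 - y2) := by
      ring
    rw [e]
    have t1 := abs_cmul_le (2*p₁) (y1*y1 - x1*x1) (ρ*d + ρ*d) (by positivity) hb11
    have t2 := abs_cmul_le (2*p₁) (y2*y2 - x2*x2) (ρ*d + ρ*d) (by positivity) hb22
    have t3 := abs_cmul_le (2*p₄*ρ) (x2 - y2) d (by positivity) h2
    calc |(2*p₁) * (y1*y1 - x1*x1) + (2*p₁) * (y2*y2 - x2*x2) + (2*p₄*ρ) * (x2 - y2)|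
        ≤ |(2*p₁) * (y1*y1 - x1*x1) + (2*p₁) * (y2*y2 - x2*x2)|
            + |(2*p₄*ρ) * (x2 - y2)| := abs_add_le _ _
      _ ≤ |(2*p₁) * (y1*y1 - x1*x1)| + |(2*p₁) * (y2*y2 - x2*x2)|
            + |(2*p₄*ρ) * (x2 - y2)| := by
          have := abs_add_le ((2*p₁) * (y1*y1 - x1*x1)) ((2*p₁) * (y2*y2 - x2*x2))
          linarith
      _ ≤ 10*p₁*ρ*d := by linarith
  calc dist (vf3 p₁ p₄ ρ (x1,x2,x3)) (vf3 p₁ p₄ ρ (y1,y2,y3))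
      = max (dist (2*p₁*x3*x1) (2*p₁*y3*y1))
          (max (dist (2*p₁*x3*x2 - 2*p₄*ρ*x3) (2*p₁*y3*y2 - 2*p₄*ρ*y3))
            (dist (-(2*p₁*(x1^2 + x2^2)) + 2*p₄*ρ*x2) (-(2*p₁*(y1^2 + y2^2)) + 2*p₄*ρ*y2))) := by
        simp only [vf3, Prod.dist_eq]
    _ ≤ 10*p₁*ρ*d := max_le hA (max_le hB hC)

private lemma mem_ball_of_sphere {ρ x y z : ℝ} (hρ : 0 < ρ)
    (h : x ^ 2 + y ^ 2 + z ^ 2 = ρ ^ 2) :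
    ((x, y, z) : ℝ × ℝ × ℝ) ∈ closedBall (0 : ℝ × ℝ × ℝ) ρ := by
  rw [mem_closedBall_zero_iff, Prod.norm_def, Prod.norm_def]
  simp only [Real.norm_eq_abs, max_le_iff]
  have hx : |x| ≤ ρ := by
    rw [← Real.sqrt_sq_eq_abs, ← Real.sqrt_sq hρ.le]
    exact Real.sqrt_le_sqrt (by nlinarith [sq_nonneg y, sq_nonneg z])
  have hy : |y| ≤ ρ := by
    rw [← Real.sqrt_sq_eq_abs, ← Real.sqrt_sq hρ.le]
    exact Real.sqrt_le_sqrt (by nlinarith [sq_nonneg x, sq_nonneg z])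
  have hz : |z| ≤ ρ := by
    rw [← Real.sqrt_sq_eq_abs, ← Real.sqrt_sq hρ.le]
    exact Real.sqrt_le_sqrt (by nlinarith [sq_nonneg x, sq_nonneg y])
  exact ⟨hx, hy, hz⟩

private lemma unique_sol (p₁ p₄ ρ : ℝ) (h₁ : 0 < p₁) (h₄ : 0 ≤ p₄) (h41 : p₄ ≤ p₁)
    (hρ : 0 < ρ) (D R I Dc Rc Ic : ℝ → ℝ)
    (hD : ∀ τ, HasDerivAt D (2 * p₁ * I τ * D τ) τ)
    (hR : ∀ τ, HasDerivAt R (2 * p₁ * I τ * R τ - 2 * p₄ * ρ * I τ) τ)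
    (hI : ∀ τ, HasDerivAt I (-(2 * p₁ * (D τ ^ 2 + R τ ^ 2)) + 2 * p₄ * ρ * R τ) τ)
    (hDc : ∀ τ, HasDerivAt Dc (2 * p₁ * Ic τ * Dc τ) τ)
    (hRc : ∀ τ, HasDerivAt Rc (2 * p₁ * Ic τ * Rc τ - 2 * p₄ * ρ * Ic τ) τ)
    (hIc : ∀ τ, HasDerivAt Ic (-(2 * p₁ * (Dc τ ^ 2 + Rc τ ^ 2)) + 2 * p₄ * ρ * Rc τ) τ)
    (hsph : D 0 ^ 2 + R 0 ^ 2 + I 0 ^ 2 = ρ ^ 2)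
    (h0D : D 0 = Dc 0) (h0R : R 0 = Rc 0) (h0I : I 0 = Ic 0) :
    ∀ τ, D τ = Dc τ ∧ R τ = Rc τ ∧ I τ = Ic τ := by
  have hsphc : Dc 0 ^ 2 + Rc 0 ^ 2 + Ic 0 ^ 2 = ρ ^ 2 := by rw [← h0D, ← h0R, ← h0I]; exact hsph
  have hmem : ∀ τ, ((D τ, R τ, I τ) : ℝ × ℝ × ℝ) ∈ closedBall (0 : ℝ × ℝ × ℝ) ρ := by
    intro τ
    exact mem_ball_of_sphere hρ ((conserve3 p₁ p₄ ρ D R I hD hR hI τ).trans hsph)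
  have hmemc : ∀ τ, ((Dc τ, Rc τ, Ic τ) : ℝ × ℝ × ℝ) ∈ closedBall (0 : ℝ × ℝ × ℝ) ρ := by
    intro τ
    exact mem_ball_of_sphere hρ ((conserve3 p₁ p₄ ρ Dc Rc Ic hDc hRc hIc τ).trans hsphc)
  have hf : ∀ τ, HasDerivAt (fun t => ((D t, R t, I t) : ℝ × ℝ × ℝ))
      (vf3 p₁ p₄ ρ (D τ, R τ, I τ)) τ := by
    intro τ
    exact (hD τ).prodMk ((hR τ).prodMk (hI τ))
  have hg : ∀ τ, HasDerivAt (fun t => ((Dc t, Rc t, Ic t) : ℝ × ℝ × ℝ))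
      (vf3 p₁ p₄ ρ (Dc τ, Rc τ, Ic τ)) τ := by
    intro τ
    exact (hDc τ).prodMk ((hRc τ).prodMk (hIc τ))
  intro τ
  have hτ : τ ∈ Ioo (-(|τ|+1)) (|τ|+1) := by
    constructor <;> cases abs_cases τ <;> linarith [abs_nonneg τ]
  have h0mem : (0 : ℝ) ∈ Ioo (-(|τ|+1)) (|τ|+1) := by
    constructor <;> linarith [abs_nonneg τ]
  have key := ODE_solution_unique_of_mem_Ioo
    (v := fun _ x => vf3 p₁ p₄ ρ x) (s := fun _ => closedBall (0 : ℝ × ℝ × ℝ) ρ)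
    (fun _ _ => vf3_lip p₁ p₄ ρ h₁ h₄ h41 hρ) h0mem
    (fun t _ => ⟨hf t, hmem t⟩) (fun t _ => ⟨hg t, hmemc t⟩)
    (by simp [h0D, h0R, h0I])
  have := key hτ
  simpa using this

private lemma numer_id (p₁ ρ a sb M D0 R0 C S : ℝ)
    (hsb : sb^2 = 1 - a^2) (hM2 : M^2 = (a*ρ - R0)^2 + (1-a^2)*D0^2)
    (hC : C^2 = 1 + S^2) :
    -(ρ*sb*M*(C*(2*p₁*ρ*sb)))*(M*C - a*(a*ρ-R0)) - (-(ρ*sb*M*S))*(M*(S*(2*p₁*ρ*sb)))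
      = -(2*p₁)*(((1-a^2)*ρ*D0)^2 + (a*ρ*(M*C - a*(a*ρ-R0)) + (1-a^2)*ρ*(R0-a*ρ))^2)
        + 2*(a*p₁)*ρ*(a*ρ*(M*C - a*(a*ρ-R0)) + (1-a^2)*ρ*(R0-a*ρ))*(M*C - a*(a*ρ-R0)) := by
  linear_combination (-(2*p₁*ρ^2*M*(M - (a*(a*ρ-R0))*C))) * hsb
    + (-(2*p₁*ρ^2*sb^2*M^2)) * hC + (-(2*p₁*ρ^2*(1-a^2))) * hM2

private lemma cand_ode (p₁ p₄ ρ a sb M τ₀ D0 R0 : ℝ)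
    (hp4 : p₄ = a * p₁)
    (hsb : sb^2 = 1 - a^2)
    (hM2 : M^2 = (a*ρ - R0)^2 + (1-a^2)*D0^2)
    (hpos : ∀ x : ℝ, 0 < M * Real.cosh x - a*(a*ρ - R0)) :
    (∀ τ, HasDerivAt
        (fun τ => (1-a^2)*ρ*D0 / (M * Real.cosh (2*p₁*ρ*sb*τ - τ₀) - a*(a*ρ - R0)))
        (2*p₁ * (-(ρ*sb*M*Real.sinh (2*p₁*ρ*sb*τ - τ₀))
            / (M * Real.cosh (2*p₁*ρ*sb*τ - τ₀) - a*(a*ρ - R0)))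
          * ((1-a^2)*ρ*D0 / (M * Real.cosh (2*p₁*ρ*sb*τ - τ₀) - a*(a*ρ - R0)))) τ) ∧
    (∀ τ, HasDerivAt
        (fun τ => a*ρ + (1-a^2)*ρ*(R0 - a*ρ) / (M * Real.cosh (2*p₁*ρ*sb*τ - τ₀) - a*(a*ρ - R0)))
        (2*p₁ * (-(ρ*sb*M*Real.sinh (2*p₁*ρ*sb*τ - τ₀))
            / (M * Real.cosh (2*p₁*ρ*sb*τ - τ₀) - a*(a*ρ - R0)))
          * (a*ρ + (1-a^2)*ρ*(R0 - a*ρ) / (M * Real.cosh (2*p₁*ρ*sb*τ - τ₀) - a*(a*ρ - R0)))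
         - 2*p₄*ρ * (-(ρ*sb*M*Real.sinh (2*p₁*ρ*sb*τ - τ₀))
            / (M * Real.cosh (2*p₁*ρ*sb*τ - τ₀) - a*(a*ρ - R0)))) τ) ∧
    (∀ τ, HasDerivAt
        (fun τ => -(ρ*sb*M*Real.sinh (2*p₁*ρ*sb*τ - τ₀))
            / (M * Real.cosh (2*p₁*ρ*sb*τ - τ₀) - a*(a*ρ - R0)))
        (-(2*p₁*(((1-a^2)*ρ*D0 / (M * Real.cosh (2*p₁*ρ*sb*τ - τ₀) - a*(a*ρ - R0)))^2
            + (a*ρ + (1-a^2)*ρ*(R0 - a*ρ)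
                / (M * Real.cosh (2*p₁*ρ*sb*τ - τ₀) - a*(a*ρ - R0)))^2))
          + 2*p₄*ρ * (a*ρ + (1-a^2)*ρ*(R0 - a*ρ)
              / (M * Real.cosh (2*p₁*ρ*sb*τ - τ₀) - a*(a*ρ - R0)))) τ) := by
  have hden : ∀ x : ℝ, M * Real.cosh x - a*(a*ρ - R0) ≠ 0 := fun x => (hpos x).ne'
  have hs : ∀ τ : ℝ, HasDerivAt (fun τ => 2*p₁*ρ*sb*τ - τ₀) (2*p₁*ρ*sb) τ := by
    intro τ
    simpa using ((hasDerivAt_id τ).const_mul (2*p₁*ρ*sb)).sub_const τ₀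
  have hΦ : ∀ τ : ℝ, HasDerivAt
      (fun τ => M * Real.cosh (2*p₁*ρ*sb*τ - τ₀) - a*(a*ρ - R0))
      (M * (Real.sinh (2*p₁*ρ*sb*τ - τ₀) * (2*p₁*ρ*sb))) τ := by
    intro τ
    exact (((hs τ).cosh).const_mul M).sub_const _
  refine ⟨fun τ => ?_, fun τ => ?_, fun τ => ?_⟩
  · have h := (hasDerivAt_const τ ((1-a^2)*ρ*D0)).div (hΦ τ) (hden _)
    have hd1 : M * Real.cosh (2*p₁*ρ*sb*τ - τ₀) - a*(a*ρ - R0) ≠ 0 := hden _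
    refine h.congr_deriv ?_
    field_simp [hd1]
    ring
  · have h := ((hasDerivAt_const τ (a*ρ)).add
      ((hasDerivAt_const τ ((1-a^2)*ρ*(R0 - a*ρ))).div (hΦ τ) (hden _)))
    have hd1 : M * Real.cosh (2*p₁*ρ*sb*τ - τ₀) - a*(a*ρ - R0) ≠ 0 := hden _
    refine h.congr_deriv ?_
    rw [hp4]
    simp only [div_eq_mul_inv, ← inv_pow]
    ring
  · have hN : HasDerivAt (fun τ => -(ρ*sb*M*Real.sinh (2*p₁*ρ*sb*τ - τ₀)))
        (-(ρ*sb*M*(Real.cosh (2*p₁*ρ*sb*τ - τ₀) * (2*p₁*ρ*sb)))) τ :=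
      (((hs τ).sinh).const_mul (ρ*sb*M)).neg
    have h := hN.div (hΦ τ) (hden _)
    refine h.congr_deriv ?_
    rw [hp4]
    have hC : Real.cosh (2*p₁*ρ*sb*τ - τ₀)^2 = 1 + Real.sinh (2*p₁*ρ*sb*τ - τ₀)^2 := by
      rw [Real.cosh_sq]; ring
    have hnum := numer_id p₁ ρ a sb M D0 R0
      (Real.cosh (2*p₁*ρ*sb*τ - τ₀)) (Real.sinh (2*p₁*ρ*sb*τ - τ₀)) hsb hM2 hC
    have hd1 : M * Real.cosh (2*p₁*ρ*sb*τ - τ₀) - a*(a*ρ - R0) ≠ 0 := hden _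
    rw [hnum]
    field_simp [hd1]
open Filter

set_option maxHeartbeats 1000000 in
/-- Case 6 (combination of p₁- and p₄-components), regime p₁ > p₄:
explicit solution and convergence to the fixed points. -/
theorem stmt_4 (p₁ p₄ ρ : ℝ) (hp : p₁ > p₄) (hp₄ : p₄ > 0) (hρ : 0 < ρ)
    (a : ℝ) (ha : a = p₄ / p₁) (D R I : ℝ → ℝ)
    (hD : ∀ τ, HasDerivAt D (2 * p₁ * I τ * D τ) τ)
    (hR : ∀ τ, HasDerivAt R (2 * p₁ * I τ * R τ - 2 * p₄ * ρ * I τ) τ)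
    (hI : ∀ τ, HasDerivAt I (-(2 * p₁ * (D τ ^ 2 + R τ ^ 2)) + 2 * p₄ * ρ * R τ) τ)
    (hsphere : D 0 ^ 2 + R 0 ^ 2 + I 0 ^ 2 = ρ ^ 2)
    (hne₁ : (D 0, R 0, I 0) ≠ (0, a * ρ, ρ * Real.sqrt (1 - a ^ 2)))
    (hne₂ : (D 0, R 0, I 0) ≠ (0, a * ρ, -(ρ * Real.sqrt (1 - a ^ 2))))
    (M : ℝ) (hM : M = Real.sqrt ((a * ρ - R 0) ^ 2 + (1 - a ^ 2) * D 0 ^ 2)) :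
    (∃ τ₀ : ℝ, τ₀ * I 0 ≥ 0 ∧
      (1 - a ^ 2) * ρ / (M * Real.cosh τ₀ - a * (a * ρ - R 0)) = 1 ∧
      ∀ τ : ℝ,
        D τ = (1 - a ^ 2) * ρ * D 0
                / (M * Real.cosh (2 * p₁ * ρ * Real.sqrt (1 - a ^ 2) * τ - τ₀)
                    - a * (a * ρ - R 0)) ∧
        R τ = a * ρ + (1 - a ^ 2) * ρ * (R 0 - a * ρ)
                / (M * Real.cosh (2 * p₁ * ρ * Real.sqrt (1 - a ^ 2) * τ - τ₀)
                    - a * (a * ρ - R 0)) ∧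
        I τ = -(ρ * Real.sqrt (1 - a ^ 2) * M
                  * Real.sinh (2 * p₁ * ρ * Real.sqrt (1 - a ^ 2) * τ - τ₀))
                / (M * Real.cosh (2 * p₁ * ρ * Real.sqrt (1 - a ^ 2) * τ - τ₀)
                    - a * (a * ρ - R 0))) ∧
    Tendsto (fun τ => (D τ, R τ, I τ)) atTop
      (nhds (0, a * ρ, -(ρ * Real.sqrt (1 - a ^ 2)))) ∧
    Tendsto (fun τ => (D τ, R τ, I τ)) atBot
      (nhds (0, a * ρ, ρ * Real.sqrt (1 - a ^ 2))) := by
  have hp₁ : 0 < p₁ := lt_trans hp₄ hp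
  have ha0 : 0 < a := by rw [ha]; positivity
  have ha1 : a < 1 := by rw [ha, div_lt_one hp₁]; exact hp
  have hb0 : 0 < 1 - a ^ 2 := by nlinarith
  set sb := Real.sqrt (1 - a ^ 2) with hsbdef
  have hsb : sb ^ 2 = 1 - a ^ 2 := Real.sq_sqrt hb0.le
  have hsb0 : 0 < sb := Real.sqrt_pos.mpr hb0
  have hp4 : p₄ = a * p₁ := by rw [ha]; field_simp
  have hM2 : M ^ 2 = (a * ρ - R 0) ^ 2 + (1 - a ^ 2) * D 0 ^ 2 := by
    rw [hM]
    exact Real.sq_sqrt (add_nonneg (sq_nonneg _) (mul_nonneg hb0.le (sq_nonneg _)))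
  have hMnonneg : 0 ≤ M := hM ▸ Real.sqrt_nonneg _
  have hM0 : 0 < M := by
    rcases hMnonneg.lt_or_eq with h | h
    · exact h
    · exfalso
      have h2 : (a * ρ - R 0) ^ 2 + (1 - a ^ 2) * D 0 ^ 2 = 0 := by
        rw [← hM2, ← h]; ring
      have hD0 : D 0 = 0 := by
        have h3 : D 0 ^ 2 ≤ 0 := by nlinarith [sq_nonneg (a * ρ - R 0)]
        have h4 : D 0 ^ 2 = 0 := le_antisymm h3 (sq_nonneg _)
        exact (pow_eq_zero_iff two_ne_zero).mp h4
      have hR0 : R 0 = a * ρ := by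
        have h3 : (a * ρ - R 0) ^ 2 ≤ 0 := by
          nlinarith [mul_nonneg hb0.le (sq_nonneg (D 0))]
        have h4 : (a * ρ - R 0) ^ 2 = 0 := le_antisymm h3 (sq_nonneg _)
        have := (pow_eq_zero_iff two_ne_zero).mp h4
        linarith
      rw [hD0, hR0] at hsphere
      have hI2 : (I 0 - ρ * sb) * (I 0 + ρ * sb) = 0 := by
        linear_combination hsphere - ρ ^ 2 * hsb
      rcases mul_eq_zero.mp hI2 with h' | h'
      · exact hne₁ (by rw [hD0, hR0, show I 0 = ρ * sb from by linarith])
      · exact hne₂ (by rw [hD0, hR0, show I 0 = -(ρ * sb) from by linarith])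
  have hRle : R 0 ≤ ρ := by
    nlinarith [sq_nonneg (D 0), sq_nonneg (I 0), sq_nonneg (R 0 - ρ)]
  have hpos2 : 0 < ρ - a * R 0 := by nlinarith
  have hsq : (ρ - a * R 0) ^ 2 = M ^ 2 + (1 - a ^ 2) * I 0 ^ 2 := by
    linear_combination -hM2 - (1 - a ^ 2) * hsphere
  have hρaR : M ≤ ρ - a * R 0 := by
    calc M = Real.sqrt (M ^ 2) := (Real.sqrt_sq hMnonneg).symm
      _ ≤ Real.sqrt ((ρ - a * R 0) ^ 2) := Real.sqrt_le_sqrt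
          (by nlinarith [mul_nonneg hb0.le (sq_nonneg (I 0))])
      _ = ρ - a * R 0 := Real.sqrt_sq hpos2.le
  set τ₀ := Real.arsinh (sb * I 0 / M) with hτ₀def
  have hsinh : Real.sinh τ₀ = sb * I 0 / M := Real.sinh_arsinh _
  have hcosh : M * Real.cosh τ₀ = ρ - a * R 0 := by
    rw [hτ₀def, Real.cosh_arsinh]
    have e : 1 + (sb * I 0 / M) ^ 2 = ((ρ - a * R 0) / M) ^ 2 := by
      field_simp
      linear_combination (I 0 ^ 2) * hsb - hsq
    rw [e, Real.sqrt_sq (div_nonneg hpos2.le hM0.le)]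
    field_simp
  have hΦpos : ∀ x : ℝ, 0 < M * Real.cosh x - a * (a * ρ - R 0) := by
    intro x
    have h1 : |a * ρ - R 0| ≤ M := by
      rw [← Real.sqrt_sq_eq_abs, hM]
      exact Real.sqrt_le_sqrt (by nlinarith [mul_nonneg hb0.le (sq_nonneg (D 0))])
    obtain ⟨hl, hr⟩ := abs_le.mp h1
    have h2 := Real.one_le_cosh x
    have h3 : M * 1 ≤ M * Real.cosh x := mul_le_mul_of_nonneg_left h2 hM0.le
    have h4 : a * (a * ρ - R 0) ≤ a * M := mul_le_mul_of_nonneg_left hr ha0.le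
    nlinarith
  have hden0 : M * Real.cosh τ₀ - a * (a * ρ - R 0) = (1 - a ^ 2) * ρ := by
    rw [hcosh]; ring
  obtain ⟨hDc, hRc, hIc⟩ := cand_ode p₁ p₄ ρ a sb M τ₀ (D 0) (R 0) hp4 hsb hM2 hΦpos
  have hΦ0 : M * Real.cosh (2 * p₁ * ρ * sb * 0 - τ₀) - a * (a * ρ - R 0)
      = (1 - a ^ 2) * ρ := by
    rw [show 2 * p₁ * ρ * sb * 0 - τ₀ = -τ₀ by ring, Real.cosh_neg, hden0]
  have hD0c : D 0 = (1 - a ^ 2) * ρ * D 0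
      / (M * Real.cosh (2 * p₁ * ρ * sb * 0 - τ₀) - a * (a * ρ - R 0)) := by
    rw [hΦ0]; field_simp
  have hR0c : R 0 = a * ρ + (1 - a ^ 2) * ρ * (R 0 - a * ρ)
      / (M * Real.cosh (2 * p₁ * ρ * sb * 0 - τ₀) - a * (a * ρ - R 0)) := by
    rw [hΦ0]; field_simp; ring
  have hI0c : I 0 = -(ρ * sb * M * Real.sinh (2 * p₁ * ρ * sb * 0 - τ₀))
      / (M * Real.cosh (2 * p₁ * ρ * sb * 0 - τ₀) - a * (a * ρ - R 0)) := by
    rw [hΦ0, show 2 * p₁ * ρ * sb * 0 - τ₀ = -τ₀ by ring, Real.sinh_neg, hsinh]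
    field_simp
    linear_combination (-(I 0)) * hsb
  have huniq := unique_sol p₁ p₄ ρ hp₁ hp₄.le hp.le hρ D R I
    (fun τ => (1 - a ^ 2) * ρ * D 0
      / (M * Real.cosh (2 * p₁ * ρ * sb * τ - τ₀) - a * (a * ρ - R 0)))
    (fun τ => a * ρ + (1 - a ^ 2) * ρ * (R 0 - a * ρ)
      / (M * Real.cosh (2 * p₁ * ρ * sb * τ - τ₀) - a * (a * ρ - R 0)))
    (fun τ => -(ρ * sb * M * Real.sinh (2 * p₁ * ρ * sb * τ - τ₀))
      / (M * Real.cosh (2 * p₁ * ρ * sb * τ - τ₀) - a * (a * ρ - R 0)))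
    hD hR hI hDc hRc hIc hsphere hD0c hR0c hI0c
  -- limits machinery
  have hk : 0 < 2 * p₁ * ρ * sb := by positivity
  have hmul_top : Tendsto (fun τ : ℝ => 2 * p₁ * ρ * sb * τ) atTop atTop :=
    Tendsto.const_mul_atTop hk tendsto_id
  have hmul_bot : Tendsto (fun τ : ℝ => 2 * p₁ * ρ * sb * τ) atBot atBot :=
    Tendsto.const_mul_atBot hk tendsto_id
  have hstop : Tendsto (fun τ : ℝ => 2 * p₁ * ρ * sb * τ - τ₀) atTop atTop := by
    simpa [sub_eq_add_neg] using tendsto_atTop_add_const_right atTop (-τ₀) hmul_top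
  have hsbot : Tendsto (fun τ : ℝ => 2 * p₁ * ρ * sb * τ - τ₀) atBot atBot := by
    simpa [sub_eq_add_neg] using tendsto_atBot_add_const_right atBot (-τ₀) hmul_bot
  have hcosh_top : Tendsto Real.cosh atTop atTop := by
    apply tendsto_atTop_mono (fun x => ?_) (Real.tendsto_exp_atTop.atTop_div_const two_pos)
    rw [Real.cosh_eq]
    have := Real.exp_pos (-x)
    linarith
  have hcosh_bot : Tendsto Real.cosh atBot atTop := by
    have := hcosh_top.comp tendsto_neg_atBot_atTop
    refine this.congr fun x => ?_
    simp [Function.comp, Real.cosh_neg]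
  have hΦtop : Tendsto (fun τ => M * Real.cosh (2 * p₁ * ρ * sb * τ - τ₀)
      - a * (a * ρ - R 0)) atTop atTop := by
    apply tendsto_atTop_add_const_right
    exact Tendsto.const_mul_atTop hM0 (hcosh_top.comp hstop)
  have hΦbot : Tendsto (fun τ => M * Real.cosh (2 * p₁ * ρ * sb * τ - τ₀)
      - a * (a * ρ - R 0)) atBot atTop := by
    apply tendsto_atTop_add_const_right
    exact Tendsto.const_mul_atTop hM0 (hcosh_bot.comp hsbot)
  -- the sinh/cosh ratio
  have hexp_top : Tendsto (fun u : ℝ => Real.exp (-u)) atTop (nhds 0) :=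
    Real.tendsto_exp_atBot.comp tendsto_neg_atTop_atBot
  have hreq : ∀ u : ℝ, M * Real.sinh u / (M * Real.cosh u - a * (a * ρ - R 0))
      = (M * (1 - Real.exp (-u) ^ 2))
        / (M * (1 + Real.exp (-u) ^ 2) - 2 * (a * (a * ρ - R 0)) * Real.exp (-u)) := by
    intro u
    have hE : Real.exp (-u) * Real.exp u = 1 := by rw [← Real.exp_add]; simp
    have hd1 : M * Real.cosh u - a * (a * ρ - R 0) ≠ 0 := (hΦpos u).ne'
    have hd2 : M * (1 + Real.exp (-u) ^ 2) - 2 * (a * (a * ρ - R 0)) * Real.exp (-u)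
        = 2 * Real.exp (-u) * (M * Real.cosh u - a * (a * ρ - R 0)) := by
      rw [Real.cosh_eq]
      linear_combination -M * hE
    rw [hd2, div_eq_div_iff hd1 (mul_ne_zero (by positivity) hd1), Real.sinh_eq]
    linear_combination (M * (M * Real.cosh u - a * (a * ρ - R 0))) * hE
  have hrtop : Tendsto (fun u => M * Real.sinh u / (M * Real.cosh u - a * (a * ρ - R 0)))
      atTop (nhds 1) := by
    have hnum : Tendsto (fun u : ℝ => M * (1 - Real.exp (-u) ^ 2)) atTop
        (nhds (M * (1 - (0:ℝ) ^ 2))) :=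
      tendsto_const_nhds.mul (tendsto_const_nhds.sub (hexp_top.pow 2))
    have hden : Tendsto (fun u : ℝ => M * (1 + Real.exp (-u) ^ 2)
        - 2 * (a * (a * ρ - R 0)) * Real.exp (-u)) atTop
        (nhds (M * (1 + (0:ℝ) ^ 2) - 2 * (a * (a * ρ - R 0)) * 0)) :=
      (tendsto_const_nhds.mul (tendsto_const_nhds.add (hexp_top.pow 2))).sub
        (tendsto_const_nhds.mul hexp_top)
    have hlim := hnum.div hden (by simpa using hM0.ne')
    have hval : M * (1 - (0:ℝ) ^ 2) / (M * (1 + (0:ℝ) ^ 2) - 2 * (a * (a * ρ - R 0)) * 0)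
        = 1 := by
      rw [show M * (1 - (0:ℝ) ^ 2) = M by ring,
        show M * (1 + (0:ℝ) ^ 2) - 2 * (a * (a * ρ - R 0)) * 0 = M by ring]
      exact div_self hM0.ne'
    rw [hval] at hlim
    exact hlim.congr fun u => (hreq u).symm
  have hrbot : Tendsto (fun u => M * Real.sinh u / (M * Real.cosh u - a * (a * ρ - R 0)))
      atBot (nhds (-1)) := by
    have hodd : ∀ u : ℝ, M * Real.sinh (-u) / (M * Real.cosh (-u) - a * (a * ρ - R 0))
        = -(M * Real.sinh u / (M * Real.cosh u - a * (a * ρ - R 0))) := by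
      intro u
      rw [Real.sinh_neg, Real.cosh_neg, mul_neg, neg_div]
    have h := (hrtop.comp tendsto_neg_atBot_atTop).neg
    refine h.congr fun u => ?_
    show -(M * Real.sinh (-u) / (M * Real.cosh (-u) - a * (a * ρ - R 0))) = _
    rw [hodd u, neg_neg]
  -- candidate limits
  have hDtop : Tendsto (fun τ => (1 - a ^ 2) * ρ * D 0
      / (M * Real.cosh (2 * p₁ * ρ * sb * τ - τ₀) - a * (a * ρ - R 0))) atTop (nhds 0) :=
    tendsto_const_nhds.div_atTop hΦtop
  have hDbot : Tendsto (fun τ => (1 - a ^ 2) * ρ * D 0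
      / (M * Real.cosh (2 * p₁ * ρ * sb * τ - τ₀) - a * (a * ρ - R 0))) atBot (nhds 0) :=
    tendsto_const_nhds.div_atTop hΦbot
  have hRtop : Tendsto (fun τ => a * ρ + (1 - a ^ 2) * ρ * (R 0 - a * ρ)
      / (M * Real.cosh (2 * p₁ * ρ * sb * τ - τ₀) - a * (a * ρ - R 0))) atTop
      (nhds (a * ρ)) := by
    have hdiv : Tendsto (fun τ => (1 - a ^ 2) * ρ * (R 0 - a * ρ)
        / (M * Real.cosh (2 * p₁ * ρ * sb * τ - τ₀) - a * (a * ρ - R 0))) atTop (nhds 0) :=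
      tendsto_const_nhds.div_atTop hΦtop
    have h : Tendsto (fun τ => a * ρ + (1 - a ^ 2) * ρ * (R 0 - a * ρ)
        / (M * Real.cosh (2 * p₁ * ρ * sb * τ - τ₀) - a * (a * ρ - R 0))) atTop
        (nhds (a * ρ + 0)) := Tendsto.add tendsto_const_nhds hdiv
    simpa using h
  have hRbot : Tendsto (fun τ => a * ρ + (1 - a ^ 2) * ρ * (R 0 - a * ρ)
      / (M * Real.cosh (2 * p₁ * ρ * sb * τ - τ₀) - a * (a * ρ - R 0))) atBot
      (nhds (a * ρ)) := by
    have hdiv : Tendsto (fun τ => (1 - a ^ 2) * ρ * (R 0 - a * ρ)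
        / (M * Real.cosh (2 * p₁ * ρ * sb * τ - τ₀) - a * (a * ρ - R 0))) atBot (nhds 0) :=
      tendsto_const_nhds.div_atTop hΦbot
    have h : Tendsto (fun τ => a * ρ + (1 - a ^ 2) * ρ * (R 0 - a * ρ)
        / (M * Real.cosh (2 * p₁ * ρ * sb * τ - τ₀) - a * (a * ρ - R 0))) atBot
        (nhds (a * ρ + 0)) := Tendsto.add tendsto_const_nhds hdiv
    simpa using h
  have hIeq : ∀ τ : ℝ, -(ρ * sb * M * Real.sinh (2 * p₁ * ρ * sb * τ - τ₀))
      / (M * Real.cosh (2 * p₁ * ρ * sb * τ - τ₀) - a * (a * ρ - R 0))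
      = -(ρ * sb) * (M * Real.sinh (2 * p₁ * ρ * sb * τ - τ₀)
          / (M * Real.cosh (2 * p₁ * ρ * sb * τ - τ₀) - a * (a * ρ - R 0))) := by
    intro τ
    rw [mul_div_assoc]
    ring
  have hItop : Tendsto (fun τ => -(ρ * sb * M * Real.sinh (2 * p₁ * ρ * sb * τ - τ₀))
      / (M * Real.cosh (2 * p₁ * ρ * sb * τ - τ₀) - a * (a * ρ - R 0))) atTop
      (nhds (-(ρ * sb))) := by
    have h := ((hrtop.comp hstop).const_mul (-(ρ * sb)))
    have h2 : -(ρ * sb) * 1 = -(ρ * sb) := by ring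
    rw [h2] at h
    exact h.congr fun τ => (hIeq τ).symm
  have hIbot : Tendsto (fun τ => -(ρ * sb * M * Real.sinh (2 * p₁ * ρ * sb * τ - τ₀))
      / (M * Real.cosh (2 * p₁ * ρ * sb * τ - τ₀) - a * (a * ρ - R 0))) atBot
      (nhds (ρ * sb)) := by
    have h := ((hrbot.comp hsbot).const_mul (-(ρ * sb)))
    have h2 : -(ρ * sb) * (-1) = ρ * sb := by ring
    rw [h2] at h
    exact h.congr fun τ => (hIeq τ).symm
  refine ⟨⟨τ₀, ?_, ?_, ?_⟩, ?_, ?_⟩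
  · -- τ₀ * I 0 ≥ 0
    rcases le_or_gt 0 (I 0) with hI0 | hI0
    · have hτ : 0 ≤ τ₀ := Real.arsinh_nonneg_iff.mpr
        (div_nonneg (mul_nonneg hsb0.le hI0) hM0.le)
      exact mul_nonneg hτ hI0
    · have hτ : τ₀ ≤ 0 := Real.arsinh_nonpos_iff.mpr
        (div_nonpos_of_nonpos_of_nonneg (by nlinarith) hM0.le)
      nlinarith
  · rw [hden0]
    exact div_self (by positivity)
  · intro τ
    exact huniq τ
  · have := hDtop.prodMk_nhds (hRtop.prodMk_nhds hItop)
    refine this.congr fun τ => ?_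
    simp only [Prod.mk.injEq]
    exact ⟨(huniq τ).1.symm, (huniq τ).2.1.symm, (huniq τ).2.2.symm⟩
  · have := hDbot.prodMk_nhds (hRbot.prodMk_nhds hIbot)
    refine this.congr fun τ => ?_
    simp only [Prod.mk.injEq]
    exact ⟨(huniq τ).1.symm, (huniq τ).2.1.symm, (huniq τ).2.2.symm⟩
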